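/- Let (Ω, A, P) be a complete probability space with measurable maps Y : Ω → E, X : Ω → S into filtered Polish spaces. The following are equivalent: (ii) for every t ∈ [0,1] and A ∈ B_t(S), P(X ∈ A | G_t^Y) = P(X ∈ A | σ(Y)) a.s.; (iii) for every t ∈ [0,1], the conditional law of Y given σ(G_t^X ∪ G_t^Y) equals the conditional law of Y given G_t^Y. -/

import Mathlib

open MeasureTheory ProbabilityTheory Filter Set Topology

noncomputable section

/-- The augmentation of a sub-σ-field `m` by the `η`-null sets. -/
def aug {α : Type*} [MeasurableSpace α] (η : Measure α) (m : MeasurableSpace α) :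
    MeasurableSpace α :=
  m ⊔ MeasurableSpace.generateFrom {s : Set α | η s = 0}

/-- `Θ` is a conditional probability kernel of `γ` with respect to `η`. -/
def IsCondKernel {E S : Type*} [MeasurableSpace E] [MeasurableSpace S]
    (η : Measure E) (γ : Measure (E × S)) (Θ : Kernel E S) : Prop :=
  IsMarkovKernel Θ ∧ ∀ A B, MeasurableSet A → MeasurableSet B →
    γ (A ×ˢ B) = ∫⁻ ω in A, Θ ω B ∂η

/-- A plan `γ` on `E × S` with first marginal `η` is causal for the filtrations
`ℱE`, `ℱS` if it admits a conditional kernel `Θ` with respect to `η` such that for every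
`t` and every `C ∈ ℱS t`, `ω ↦ Θ ω C` is measurable for the `η`-augmentation of `ℱE t`. -/
def CausalPlan {E S : Type*} [MeasurableSpace E] [MeasurableSpace S]
    (ℱE : unitInterval → MeasurableSpace E) (ℱS : unitInterval → MeasurableSpace S)
    (η : Measure E) (γ : Measure (E × S)) : Prop :=
  γ.fst = η ∧ ∃ Θ : Kernel E S, IsCondKernel η γ Θ ∧
    ∀ t : unitInterval, ∀ C : Set S, MeasurableSet[ℱS t] C →
      Measurable[aug η (ℱE t)] (fun ω => Θ ω C)

section Aux

variable {Ω : Type*}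

lemma setIntegral_eq_of_generateFrom {S : Set (Set Ω)} {m0 : MeasurableSpace Ω}
    {P : Measure Ω}
    (hS : IsPiSystem S) (hle : MeasurableSpace.generateFrom S ≤ m0)
    {f g : Ω → ℝ} (hf : Integrable f P) (hg : Integrable g P)
    (h0 : ∫ x, f x ∂P = ∫ x, g x ∂P)
    (hbase : ∀ s ∈ S, ∫ x in s, f x ∂P = ∫ x in s, g x ∂P) :
    ∀ s : Set Ω, MeasurableSet[MeasurableSpace.generateFrom S] s →
      ∫ x in s, f x ∂P = ∫ x in s, g x ∂P := by
  intro s hs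
  refine MeasurableSpace.induction_on_inter (m := MeasurableSpace.generateFrom S)
    (C := fun u _ => ∫ x in u, f x ∂P = ∫ x in u, g x ∂P) rfl hS (by simp) hbase ?_ ?_ s hs
  · intro u hu h
    have hu0 : MeasurableSet u := hle _ hu
    have h1 := integral_add_compl hu0 hf
    have h2 := integral_add_compl hu0 hg
    linarith
  · intro v hdisj hmeas hC
    rw [integral_iUnion (fun i => hle _ (hmeas i)) hdisj hf.integrableOn,
      integral_iUnion (fun i => hle _ (hmeas i)) hdisj hg.integrableOn]
    exact tsum_congr hC

lemma aug_le {m m0 : MeasurableSpace Ω} {P : Measure Ω}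
    (hcomplete : ∀ s : Set Ω, P s = 0 → MeasurableSet[m0] s)
    (hm : m ≤ m0) : aug P m ≤ m0 :=
  sup_le hm (MeasurableSpace.generateFrom_le fun s hs => hcomplete s hs)

lemma condexp_aug {m m0 : MeasurableSpace Ω} {P : Measure Ω} [IsFiniteMeasure P]
    (hcomplete : ∀ s : Set Ω, P s = 0 → MeasurableSet[m0] s)
    (hm : m ≤ m0) {f : Ω → ℝ} (hf : Integrable f P) :
    P[f | aug P m] =ᵐ[P] P[f | m] := by
  have hle : aug P m ≤ m0 := aug_le hcomplete hm
  have hgen : aug P m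
      = MeasurableSpace.generateFrom ({u | MeasurableSet[m] u} ∪ {u : Set Ω | P u = 0}) := by
    rw [← MeasurableSpace.generateFrom_sup_generateFrom,
      @MeasurableSpace.generateFrom_measurableSet Ω m]
    rfl
  have hpi : IsPiSystem ({u | MeasurableSet[m] u} ∪ {u : Set Ω | P u = 0}) := by
    rintro u (hu | hu) v (hv | hv) _
    · exact Or.inl (hu.inter hv)
    · exact Or.inr (measure_mono_null Set.inter_subset_right hv)
    · exact Or.inr (measure_mono_null Set.inter_subset_left hu)
    · exact Or.inr (measure_mono_null Set.inter_subset_left hu)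
  refine (ae_eq_condExp_of_forall_setIntegral_eq hle hf
    (fun s _ _ => integrable_condExp.integrableOn) (fun s hs _ => ?_)
    (stronglyMeasurable_condExp.mono (le_sup_left : m ≤ aug P m)).aestronglyMeasurable).symm
  refine setIntegral_eq_of_generateFrom hpi (hgen ▸ hle) integrable_condExp hf
    (integral_condExp hm) ?_ s (hgen ▸ hs)
  rintro u (hu | hu)
  · exact setIntegral_condExp hm hf hu
  · rw [setIntegral_measure_zero _ hu, setIntegral_measure_zero _ hu]

/-- bounded-by-one a.e. strongly measurable functions -/
def B1 {m0 : MeasurableSpace Ω} (P : Measure Ω) (h : Ω → ℝ) : Prop :=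
  AEStronglyMeasurable h P ∧ ∀ᵐ x ∂P, ‖h x‖ ≤ 1

lemma B1.integrable {m0 : MeasurableSpace Ω} {P : Measure Ω} [IsFiniteMeasure P]
    {h : Ω → ℝ} (hh : B1 P h) : Integrable h P :=
  Integrable.mono' (integrable_const 1) hh.1 hh.2

lemma B1.mul {m0 : MeasurableSpace Ω} {P : Measure Ω} {h k : Ω → ℝ}
    (hh : B1 P h) (hk : B1 P k) : B1 P (fun x => h x * k x) := by
  refine ⟨hh.1.mul hk.1, ?_⟩
  filter_upwards [hh.2, hk.2] with x h1 h2
  rw [norm_mul]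
  nlinarith [norm_nonneg (h x), norm_nonneg (k x)]

lemma B1.condexp {m m0 : MeasurableSpace Ω} {P : Measure Ω} (hm : m ≤ m0)
    {h : Ω → ℝ} (hh : B1 P h) : B1 P (P[h | m]) := by
  refine ⟨(stronglyMeasurable_condExp.mono hm).aestronglyMeasurable, ?_⟩
  have := ae_bdd_condExp_of_ae_bdd (μ := P) (m := m) (R := 1) (f := h)
    (by simpa [Real.norm_eq_abs] using hh.2)
  simpa [Real.norm_eq_abs] using this

lemma B1.indicator {m0 : MeasurableSpace Ω} {P : Measure Ω} {s : Set Ω}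
    (hs : MeasurableSet[m0] s) : B1 P (s.indicator fun _ => (1 : ℝ)) := by
  refine ⟨(stronglyMeasurable_const.indicator hs).aestronglyMeasurable, ae_of_all _ fun x => ?_⟩
  by_cases h : x ∈ s <;> simp [Set.indicator_apply, h]

lemma integral_mul_condexp {m m0 : MeasurableSpace Ω} {P : Measure Ω} [IsFiniteMeasure P]
    (hm : m ≤ m0) {h f : Ω → ℝ}
    (hhm : StronglyMeasurable[m] h) (hh : B1 P h) (hf : B1 P f) :
    ∫ x, h x * (P[f | m]) x ∂P = ∫ x, h x * f x ∂P := by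
  have hint : Integrable (h * f) P := (hh.mul hf).integrable
  have hmul := condExp_mul_of_stronglyMeasurable_left (μ := P) hhm hint hf.integrable
  calc ∫ x, h x * (P[f | m]) x ∂P = ∫ x, (h * P[f | m]) x ∂P := rfl
    _ = ∫ x, (P[h * f | m]) x ∂P := (integral_congr_ae hmul).symm
    _ = ∫ x, (h * f) x ∂P := integral_condExp hm

lemma integral_mul_congr_right {m0 : MeasurableSpace Ω} {P : Measure Ω} {h u v : Ω → ℝ}
    (huv : u =ᵐ[P] v) :
    ∫ x, h x * u x ∂P = ∫ x, h x * v x ∂P :=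
  integral_congr_ae (huv.mono fun x hx => by dsimp only; rw [hx])

end Aux

section Core

variable {Ω : Type*}

lemma core_iff {m₁ m' m₂ m0 : MeasurableSpace Ω} {P : Measure Ω} [IsFiniteMeasure P]
    (hm₁ : m₁ ≤ m0) (hm₂ : m₂ ≤ m0) (h'2 : m' ≤ m₂) :
    (∀ A : Set Ω, MeasurableSet[m₁] A →
        P[A.indicator (fun _ => (1 : ℝ)) | m'] =ᵐ[P] P[A.indicator (fun _ => (1 : ℝ)) | m₂]) ↔
    (∀ B : Set Ω, MeasurableSet[m₂] B →
        P[B.indicator (fun _ => (1 : ℝ)) | m₁ ⊔ m'] =ᵐ[P]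
          P[B.indicator (fun _ => (1 : ℝ)) | m']) := by
  have hm' : m' ≤ m0 := h'2.trans hm₂
  have hsup : m₁ ⊔ m' ≤ m0 := sup_le hm₁ hm'
  constructor
  · intro hii B hB
    set g : Ω → ℝ := B.indicator (fun _ => (1 : ℝ)) with hg_def
    have hgB1 : B1 P g := B1.indicator (hm₂ _ hB)
    have hgm' : StronglyMeasurable[m₂] g := stronglyMeasurable_const.indicator hB
    refine (ae_eq_condExp_of_forall_setIntegral_eq hsup hgB1.integrable
      (fun s _ _ => integrable_condExp.integrableOn) (fun s hs _ => ?_)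
      (stronglyMeasurable_condExp.mono (le_sup_right : m' ≤ m₁ ⊔ m')).aestronglyMeasurable).symm
    -- reduce to the π-system of intersections
    set S : Set (Set Ω) :=
      {u | ∃ A C, MeasurableSet[m₁] A ∧ MeasurableSet[m'] C ∧ u = A ∩ C} with hS_def
    have hgen : m₁ ⊔ m' = MeasurableSpace.generateFrom S := by
      refine le_antisymm (sup_le ?_ ?_) (MeasurableSpace.generateFrom_le ?_)
      · exact fun A hA => MeasurableSpace.measurableSet_generateFrom
          ⟨A, Set.univ, hA, MeasurableSet.univ, (Set.inter_univ A).symm⟩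
      · exact fun C hC => MeasurableSpace.measurableSet_generateFrom
          ⟨Set.univ, C, MeasurableSet.univ, hC, (Set.univ_inter C).symm⟩
      · rintro u ⟨A, C, hA, hC, rfl⟩
        exact MeasurableSet.inter (le_sup_left (a := m₁) (b := m') _ hA)
          (le_sup_right (a := m₁) (b := m') _ hC)
    have hpi : IsPiSystem S := by
      rintro u ⟨A, C, hA, hC, rfl⟩ v ⟨A', C', hA', hC', rfl⟩ _
      exact ⟨A ∩ A', C ∩ C', hA.inter hA', hC.inter hC', by ext x; simp; tauto⟩
    refine setIntegral_eq_of_generateFrom hpi (hgen ▸ hsup) integrable_condExp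
      hgB1.integrable (integral_condExp hm') ?_ s (hgen ▸ hs)
    rintro u ⟨A, C, hA, hC, rfl⟩
    have hAm0 : MeasurableSet[m0] A := hm₁ _ hA
    have hCm0 : MeasurableSet[m0] C := hm' _ hC
    set fA : Ω → ℝ := A.indicator (fun _ => (1 : ℝ)) with hfA_def
    set fC : Ω → ℝ := C.indicator (fun _ => (1 : ℝ)) with hfC_def
    have hiiA : P[fA | m'] =ᵐ[P] P[fA | m₂] := hii A hA
    have hfAB1 : B1 P fA := B1.indicator hAm0
    have hfCB1 : B1 P fC := B1.indicator hCm0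
    have hfCm' : StronglyMeasurable[m'] fC := stronglyMeasurable_const.indicator hC
    have hcgB1 : B1 P (P[g | m']) := hgB1.condexp hm'
    have hcfAB1 : B1 P (P[fA | m']) := hfAB1.condexp hm'
    have hrw : ∀ u : Ω → ℝ, (A ∩ C).indicator u
        = fun x => (fC x * u x) * fA x := by
      intro u
      funext x
      by_cases hx1 : x ∈ A <;> by_cases hx2 : x ∈ C <;>
        simp [hfA_def, hfC_def, Set.indicator_apply, hx1, hx2, Set.mem_inter_iff]
    rw [← integral_indicator (hAm0.inter hCm0), ← integral_indicator (hAm0.inter hCm0),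
      hrw (P[g | m']), hrw g]
    calc ∫ x, fC x * (P[g | m']) x * fA x ∂P
        = ∫ x, (fun y => fC y * (P[g | m']) y) x * (P[fA | m₂]) x ∂P := by
          refine (integral_mul_condexp hm₂ ((hfCm'.mono h'2).mul
            (stronglyMeasurable_condExp.mono h'2)) (hfCB1.mul hcgB1) hfAB1).symm
      _ = ∫ x, (fun y => fC y * (P[g | m']) y) x * (P[fA | m']) x ∂P :=
          integral_mul_congr_right hiiA.symm
      _ = ∫ x, (fun y => fC y * (P[fA | m']) y) x * (P[g | m']) x ∂P := by
          refine integral_congr_ae (ae_of_all _ fun x => ?_)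
          dsimp only
          ring
      _ = ∫ x, (fun y => fC y * (P[fA | m']) y) x * g x ∂P :=
          integral_mul_condexp hm' (hfCm'.mul stronglyMeasurable_condExp)
            (hfCB1.mul hcfAB1) hgB1
      _ = ∫ x, (fun y => fC y * g y) x * (P[fA | m']) x ∂P := by
          refine integral_congr_ae (ae_of_all _ fun x => ?_)
          dsimp only
          ring
      _ = ∫ x, (fun y => fC y * g y) x * (P[fA | m₂]) x ∂P :=
          integral_mul_congr_right hiiA
      _ = ∫ x, (fun y => fC y * g y) x * fA x ∂P :=
          integral_mul_condexp hm₂ ((hfCm'.mono h'2).mul hgm') (hfCB1.mul hgB1) hfAB1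
      _ = ∫ x, fC x * g x * fA x ∂P := rfl
  · intro hiii A hA
    set f : Ω → ℝ := A.indicator (fun _ => (1 : ℝ)) with hf_def
    have hfB1 : B1 P f := B1.indicator (hm₁ _ hA)
    have hfsup : StronglyMeasurable[m₁ ⊔ m'] f :=
      stronglyMeasurable_const.indicator (le_sup_left (a := m₁) (b := m') _ hA)
    have hcfB1 : B1 P (P[f | m']) := hfB1.condexp hm'
    refine ae_eq_condExp_of_forall_setIntegral_eq hm₂ hfB1.integrable
      (fun s _ _ => integrable_condExp.integrableOn) (fun s hs _ => ?_)
      (stronglyMeasurable_condExp.mono h'2).aestronglyMeasurable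
    set g : Ω → ℝ := s.indicator (fun _ => (1 : ℝ)) with hg_def
    have hgB1 : B1 P g := B1.indicator (hm₂ _ hs)
    have hcgB1 : B1 P (P[g | m']) := hgB1.condexp hm'
    have hgiii : P[g | m₁ ⊔ m'] =ᵐ[P] P[g | m'] := hiii s hs
    have hrw : ∀ u : Ω → ℝ, s.indicator u = fun x => g x * u x := by
      intro u
      funext x
      by_cases hx : x ∈ s <;> simp [hg_def, Set.indicator_apply, hx]
    rw [← integral_indicator (hm₂ _ hs), ← integral_indicator (hm₂ _ hs),
      hrw (P[f | m']), hrw f]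
    calc ∫ x, g x * (P[f | m']) x ∂P
        = ∫ x, (P[f | m']) x * g x ∂P := by
          refine integral_congr_ae (ae_of_all _ fun x => ?_); dsimp only; ring
      _ = ∫ x, (P[f | m']) x * (P[g | m']) x ∂P :=
          (integral_mul_condexp hm' stronglyMeasurable_condExp hcfB1 hgB1).symm
      _ = ∫ x, (P[g | m']) x * (P[f | m']) x ∂P := by
          refine integral_congr_ae (ae_of_all _ fun x => ?_); dsimp only; ring
      _ = ∫ x, (P[g | m']) x * f x ∂P :=
          integral_mul_condexp hm' stronglyMeasurable_condExp hcgB1 hfB1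
      _ = ∫ x, f x * (P[g | m']) x ∂P := by
          refine integral_congr_ae (ae_of_all _ fun x => ?_); dsimp only; ring
      _ = ∫ x, f x * (P[g | m₁ ⊔ m']) x ∂P := integral_mul_congr_right hgiii.symm
      _ = ∫ x, f x * g x ∂P := integral_mul_condexp hsup hfsup hfB1 hgB1
      _ = ∫ x, g x * f x ∂P := by
          refine integral_congr_ae (ae_of_all _ fun x => ?_); dsimp only; ring

end Core

lemma indicator_comp_fun {α β : Type*} (X : α → β) (A : Set β) :
    (fun ω => Set.indicator A (fun _ => (1 : ℝ)) (X ω))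
      = (X ⁻¹' A).indicator (fun _ => (1 : ℝ)) := by
  funext ω
  by_cases h : X ω ∈ A <;> simp [Set.indicator_apply, h]


/-- equivalence of (ii): for all `t`, `A ∈ B_t(S)`,
`P(X ∈ A | G_t^Y) = P(X ∈ A | σ(Y))` a.s., and (iii): for all `t`, the conditional law of
`Y` given `σ(G_t^X ∪ G_t^Y)` equals the conditional law of `Y` given `G_t^Y`. -/
theorem condexp_iff_condLaw
    {E S Ω : Type*} [MeasurableSpace E] [TopologicalSpace E] [PolishSpace E] [BorelSpace E]
    [MeasurableSpace S] [TopologicalSpace S] [PolishSpace S] [BorelSpace S]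
    [MeasurableSpace Ω]
    (ℱE : unitInterval → MeasurableSpace E) (ℱS : unitInterval → MeasurableSpace S)
    (hmonoE : Monotone ℱE) (hleE : ∀ t, ℱE t ≤ ‹MeasurableSpace E›)
    (hmonoS : Monotone ℱS) (hleS : ∀ t, ℱS t ≤ ‹MeasurableSpace S›)
    (P : Measure Ω) [IsProbabilityMeasure P] (hcomplete : ∀ s : Set Ω, P s = 0 → MeasurableSet s)
    (Y : Ω → E) (hY : Measurable Y) (X : Ω → S) (hX : Measurable X) :
    (∀ t : unitInterval, ∀ A : Set S, MeasurableSet[ℱS t] A →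
        P[(fun ω => Set.indicator A (fun _ => (1 : ℝ)) (X ω)) |
            aug P (MeasurableSpace.comap Y (ℱE t))]
          =ᵐ[P]
        P[(fun ω => Set.indicator A (fun _ => (1 : ℝ)) (X ω)) |
            MeasurableSpace.comap Y ‹MeasurableSpace E›]) ↔
      (∀ t : unitInterval, ∀ B : Set E, MeasurableSet B →
        P[(fun ω => Set.indicator B (fun _ => (1 : ℝ)) (Y ω)) |
            aug P (MeasurableSpace.comap X (ℱS t)) ⊔ aug P (MeasurableSpace.comap Y (ℱE t))]
          =ᵐ[P]
        P[(fun ω => Set.indicator B (fun _ => (1 : ℝ)) (Y ω)) |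
            aug P (MeasurableSpace.comap Y (ℱE t))]) := by
  refine forall_congr' fun t => ?_
  have hm₁ : MeasurableSpace.comap X (ℱS t) ≤ ‹MeasurableSpace Ω› :=
    (MeasurableSpace.comap_mono (hleS t)).trans hX.comap_le
  have hm₂ : MeasurableSpace.comap Y ‹MeasurableSpace E› ≤ ‹MeasurableSpace Ω› := hY.comap_le
  have h'2 : MeasurableSpace.comap Y (ℱE t) ≤ MeasurableSpace.comap Y ‹MeasurableSpace E› :=
    MeasurableSpace.comap_mono (hleE t)
  have hm' : MeasurableSpace.comap Y (ℱE t) ≤ ‹MeasurableSpace Ω› := h'2.trans hm₂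
  have haug : aug P (MeasurableSpace.comap X (ℱS t)) ⊔ aug P (MeasurableSpace.comap Y (ℱE t))
      = aug P (MeasurableSpace.comap X (ℱS t) ⊔ MeasurableSpace.comap Y (ℱE t)) := by
    show MeasurableSpace.comap X (ℱS t) ⊔ _ ⊔ (MeasurableSpace.comap Y (ℱE t) ⊔ _) = _
    rw [sup_sup_sup_comm, sup_idem]
    rfl
  have hcore := core_iff (P := P) hm₁ hm₂ h'2
  constructor
  · intro h B hB
    have ca : ∀ A : Set Ω, MeasurableSet[MeasurableSpace.comap X (ℱS t)] A →
        P[A.indicator (fun _ => (1 : ℝ)) | MeasurableSpace.comap Y (ℱE t)] =ᵐ[P]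
          P[A.indicator (fun _ => (1 : ℝ)) | MeasurableSpace.comap Y ‹MeasurableSpace E›] := by
      intro A' hA'
      obtain ⟨A, hA, rfl⟩ := MeasurableSpace.measurableSet_comap.mp hA'
      have hthis := h A hA
      rw [indicator_comp_fun] at hthis
      exact (condexp_aug hcomplete hm'
        ((integrable_const (1 : ℝ)).indicator (hm₁ _ hA'))).symm.trans hthis
    have cb := hcore.mp ca
    have hBmem : MeasurableSet[MeasurableSpace.comap Y ‹MeasurableSpace E›] (Y ⁻¹' B) :=
      ⟨B, hB, rfl⟩
    have hthis := cb (Y ⁻¹' B) hBmem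
    have hint : Integrable ((Y ⁻¹' B).indicator fun _ => (1 : ℝ)) P :=
      (integrable_const (1 : ℝ)).indicator (hm₂ _ hBmem)
    rw [indicator_comp_fun, haug]
    exact (condexp_aug hcomplete (sup_le hm₁ hm') hint).trans
      (hthis.trans (condexp_aug hcomplete hm' hint).symm)
  · intro h A hA
    have cb : ∀ B : Set Ω, MeasurableSet[MeasurableSpace.comap Y ‹MeasurableSpace E›] B →
        P[B.indicator (fun _ => (1 : ℝ)) |
            MeasurableSpace.comap X (ℱS t) ⊔ MeasurableSpace.comap Y (ℱE t)] =ᵐ[P]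
          P[B.indicator (fun _ => (1 : ℝ)) | MeasurableSpace.comap Y (ℱE t)] := by
      intro B' hB'
      obtain ⟨B, hB, rfl⟩ := MeasurableSpace.measurableSet_comap.mp hB'
      have hthis := h B hB
      rw [indicator_comp_fun, haug] at hthis
      have hint : Integrable ((Y ⁻¹' B).indicator fun _ => (1 : ℝ)) P :=
        (integrable_const (1 : ℝ)).indicator (hm₂ _ hB')
      exact (condexp_aug hcomplete (sup_le hm₁ hm') hint).symm.trans
        (hthis.trans (condexp_aug hcomplete hm' hint))
    have ca := hcore.mpr cb
    have hAmem : MeasurableSet[MeasurableSpace.comap X (ℱS t)] (X ⁻¹' A) := ⟨A, hA, rfl⟩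
    have hthis := ca (X ⁻¹' A) hAmem
    have hint : Integrable ((X ⁻¹' A).indicator fun _ => (1 : ℝ)) P :=
      (integrable_const (1 : ℝ)).indicator (hm₁ _ hAmem)
    rw [indicator_comp_fun]
    exact (condexp_aug hcomplete hm' hint).trans hthis
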